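/- Let X_1 and X_2 be independent chi-squared random variables with one degree of freedom, let 0 < r < 1 and w > 0. Then E[(X_2 − X_1) / (r X_2 + X_1 + w)] > 0. -/

import Mathlib

open MeasureTheory ProbabilityTheory Real

lemma sq_integrable_gaussian : Integrable (fun x : ℝ => x ^ 2) (gaussianReal 0 1) := by
  rw [gaussianReal_of_var_ne_zero 0 one_ne_zero,
    integrable_withDensity_iff (measurable_gaussianPDF 0 1) (by
      filter_upwards with x using ENNReal.ofReal_lt_top)]
  have h2 : Integrable (fun x : ℝ => x ^ 2 * Real.exp (-(2⁻¹ : ℝ) * x ^ 2)) := by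
    have := integrable_rpow_mul_exp_neg_mul_sq (b := (2⁻¹ : ℝ)) (by norm_num)
      (s := 2) (by norm_num)
    have heq : ∀ x : ℝ, x ^ (2 : ℝ) = x ^ 2 := fun x => by
      rw [show (2 : ℝ) = ((2 : ℕ) : ℝ) by norm_num, Real.rpow_natCast]
    simpa [heq] using this
  have heq : (fun x : ℝ => x ^ 2 * (gaussianPDF 0 1 x).toReal)
      = fun x : ℝ => (Real.sqrt (2 * π * 1))⁻¹ * (x ^ 2 * Real.exp (-(2⁻¹ : ℝ) * x ^ 2)) := by
    funext x
    rw [gaussianPDF, ENNReal.toReal_ofReal (gaussianPDFReal_nonneg 0 1 x), gaussianPDFReal]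
    push_cast
    ring_nf
  rw [heq]
  exact h2.const_mul _

theorem chiSq_ratio_expectation_pos (r w : ℝ) (hr0 : 0 < r) (hr1 : r < 1) (hw : 0 < w) :
    0 < ∫ y : ℝ × ℝ,
        ((y.2) ^ 2 - (y.1) ^ 2) / (r * (y.2) ^ 2 + (y.1) ^ 2 + w)
        ∂((gaussianReal 0 1).prod (gaussianReal 0 1)) := by
  set μ : Measure ℝ := gaussianReal 0 1 with hμ
  set ν : Measure (ℝ × ℝ) := μ.prod μ with hν
  set f : ℝ × ℝ → ℝ := fun y => (y.2 ^ 2 - y.1 ^ 2) / (r * y.2 ^ 2 + y.1 ^ 2 + w) with hf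
  have hD : ∀ a b : ℝ, 0 < r * b ^ 2 + a ^ 2 + w := fun a b => by positivity
  -- integrability of coordinates squared
  have hfst : MeasurePreserving (Prod.fst : ℝ × ℝ → ℝ) ν μ :=
    ⟨measurable_fst, by simp [hν]⟩
  have hsnd : MeasurePreserving (Prod.snd : ℝ × ℝ → ℝ) ν μ :=
    ⟨measurable_snd, by simp [hν]⟩
  have h1 : Integrable (fun y : ℝ × ℝ => y.1 ^ 2) ν := by
    have := (hfst.integrable_comp (sq_integrable_gaussian).aestronglyMeasurable).2
      sq_integrable_gaussian
    exact this
  have h2 : Integrable (fun y : ℝ × ℝ => y.2 ^ 2) ν := by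
    have := (hsnd.integrable_comp (sq_integrable_gaussian).aestronglyMeasurable).2
      sq_integrable_gaussian
    exact this
  -- integrability of f
  have hf_cont : Continuous f := by
    apply Continuous.div (by fun_prop) (by fun_prop)
    exact fun y => ne_of_gt (hD y.1 y.2)
  have hbnd : Integrable (fun y : ℝ × ℝ => (y.1 ^ 2 + y.2 ^ 2) / w) ν := by
    have := (h1.add h2).div_const w
    simpa using this
  have hf_int : Integrable f ν := by
    refine Integrable.mono' hbnd hf_cont.aestronglyMeasurable ?_
    filter_upwards with y
    rw [Real.norm_eq_abs, hf, abs_div, abs_of_pos (hD y.1 y.2)]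
    refine div_le_div₀ (by positivity) ?_ hw ?_
    · have := abs_sub (y.2 ^ 2) (y.1 ^ 2)
      calc |y.2 ^ 2 - y.1 ^ 2| ≤ |y.2 ^ 2| + |y.1 ^ 2| := abs_sub _ _
        _ = y.1 ^ 2 + y.2 ^ 2 := by rw [abs_of_nonneg (sq_nonneg _), abs_of_nonneg (sq_nonneg _)]; ring
    · nlinarith [sq_nonneg y.1, sq_nonneg y.2]
  have hswap_int : Integrable (f ∘ Prod.swap) ν := hf_int.swap
  -- the symmetrized function
  set g : ℝ × ℝ → ℝ := fun y => (1 - r) * (y.2 ^ 2 - y.1 ^ 2) ^ 2 /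
      ((r * y.2 ^ 2 + y.1 ^ 2 + w) * (r * y.1 ^ 2 + y.2 ^ 2 + w)) with hg
  have hkey : ∀ y : ℝ × ℝ, f y + f y.swap = g y := by
    intro y
    have d1 := hD y.1 y.2
    have d2 := hD y.2 y.1
    simp only [hf, hg, Prod.swap, Prod.fst, Prod.snd]
    field_simp
    ring
  have hg_int : Integrable g ν := by
    have : g = fun y => f y + (f ∘ Prod.swap) y := by
      funext y; rw [← hkey y]; rfl
    rw [this]; exact hf_int.add hswap_int
  have hg_nonneg : ∀ y, 0 ≤ g y := by
    intro y
    apply div_nonneg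
    · have : (0:ℝ) ≤ 1 - r := by linarith
      positivity
    · positivity
  -- the null set
  set s : Set (ℝ × ℝ) := {y | y.2 ^ 2 = y.1 ^ 2} with hs
  have hs_meas : MeasurableSet s :=
    measurableSet_eq_fun (by fun_prop) (by fun_prop)
  have hμac : ∀ x : ℝ, μ {x} = 0 := fun x =>
    gaussianReal_absolutelyContinuous 0 one_ne_zero (measure_singleton x)
  have hνs : ν s = 0 := by
    rw [hν, Measure.prod_apply hs_meas]
    have : ∀ x : ℝ, μ (Prod.mk x ⁻¹' s) = 0 := by
      intro x
      have hsub : Prod.mk x ⁻¹' s ⊆ {x, -x} := by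
        intro z hz
        simp only [hs, Set.mem_preimage, Set.mem_setOf_eq] at hz
        have := sq_eq_sq_iff_eq_or_eq_neg.1 hz
        simpa [Set.mem_insert_iff, Set.mem_singleton_iff] using this
      refine measure_mono_null hsub ?_
      have : μ ({x, -x} : Set ℝ) ≤ μ {x} + μ {-x} := measure_union_le _ _
      simp [hμac] at this ⊢
      exact le_antisymm (by simpa [hμac] using this) zero_le
    simp [this]
  -- positivity of ∫ g
  have hsupp : sᶜ ⊆ Function.support g := by
    intro y hy
    simp only [hs, Set.mem_compl_iff, Set.mem_setOf_eq] at hy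
    have hnum : 0 < (y.2 ^ 2 - y.1 ^ 2) ^ 2 := by
      have : y.2 ^ 2 - y.1 ^ 2 ≠ 0 := sub_ne_zero.2 hy
      positivity
    have : 0 < g y := by
      apply div_pos
      · have : (0:ℝ) < 1 - r := by linarith
        positivity
      · positivity
    exact ne_of_gt this
  have hpos_supp : 0 < ν (Function.support g) := by
    refine lt_of_lt_of_le ?_ (measure_mono hsupp)
    rw [measure_compl hs_meas (measure_ne_top _ _), hνs]
    simp
  have hg_pos : 0 < ∫ y, g y ∂ν :=
    (integral_pos_iff_support_of_nonneg hg_nonneg hg_int).2 hpos_supp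
  -- conclude
  have hswap_eq : ∫ y, (f ∘ Prod.swap) y ∂ν = ∫ y, f y ∂ν := by
    simpa [hν] using integral_prod_swap (μ := μ) (ν := μ) f
  have hsum : ∫ y, g y ∂ν = (∫ y, f y ∂ν) + ∫ y, (f ∘ Prod.swap) y ∂ν := by
    rw [← integral_add hf_int hswap_int]
    congr 1
    funext y
    rw [← hkey y]; rfl
  rw [hsum, hswap_eq] at hg_pos
  have : 0 < ∫ y, f y ∂ν := by linarith
  simpa [hf, hν, hμ] using this
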